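/- Let u_0, …, u_N be points of ℝ^n whose affine span is all of ℝ^n, let Q ⊂ ℝ^n be the convex hull of {u_0, …, u_N}, and define f : ℝ^n → ℝ by f(x) = log( Σ_{i=0}^N exp(2⟨u_i, x⟩) ). Then for each index s ∈ {1, …, n}, the function x ↦ (∂f/∂x_s)(x) · det( ∂²f/∂x_i∂x_j (x) ) is Lebesgue integrable on ℝ^n and ∫_{ℝ^n} (∂f/∂x_s)(x) · det( ∂²f/∂x_i∂x_j (x) ) dx = ∫_{2·Q} y_s dy, the integral on the right being taken over the dilated polytope 2·Q = {2y : y ∈ Q} with respect to Lebesgue measure on ℝ^n; equivalently, it equals 2^{n+1} ∫_Q y_s dy. -/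

import Mathlib

open Real MeasureTheory RealInnerProductSpace Pointwise

/-- The Hessian matrix `(∂²f/∂xᵢ∂xⱼ (x))` of `f : ℝⁿ → ℝ` at `x`. -/
noncomputable def hessianMatrix {n : ℕ} (f : EuclideanSpace ℝ (Fin n) → ℝ)
    (x : EuclideanSpace ℝ (Fin n)) : Matrix (Fin n) (Fin n) ℝ :=
  fun i j =>
    iteratedFDeriv ℝ 2 f x ![EuclideanSpace.single i 1, EuclideanSpace.single j 1]


set_option maxHeartbeats 1000000

namespace Stmt3Aux
variable {n N : ℕ}
local notation "V" => EuclideanSpace ℝ (Fin n)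
variable (u : Fin (N + 1) → EuclideanSpace ℝ (Fin n))

noncomputable def A (i : Fin (N + 1)) : EuclideanSpace ℝ (Fin n) →L[ℝ] ℝ :=
  (2 : ℝ) • innerSL ℝ (u i)
@[simp] lemma A_apply (i : Fin (N + 1)) (x : V) : A u i x = 2 * ⟪u i, x⟫ := by simp [A]
noncomputable def P (i : Fin (N + 1)) (x : V) : ℝ := Real.exp (A u i x)
noncomputable def Sm (x : V) : ℝ := ∑ i, P u i x
noncomputable def Sd (x : V) : EuclideanSpace ℝ (Fin n) →L[ℝ] ℝ := ∑ i, P u i x • A u i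
lemma Sd_apply (x v : V) : Sd u x v = ∑ i, P u i x * A u i v := by simp [Sd]
lemma f_eq {f : V → ℝ} (hf : ∀ x, f x = Real.log (∑ i, Real.exp (2 * ⟪u i, x⟫))) :
    f = fun x => Real.log (Sm u x) := by
  funext x; rw [hf]; simp [Sm, P]

lemma Sm_pos (x : V) : 0 < Sm u x :=
  Finset.sum_pos (fun _ _ => Real.exp_pos _) ⟨0, Finset.mem_univ 0⟩
lemma hasFDerivAt_Sm (x : V) : HasFDerivAt (Sm u) (Sd u x) x :=
  HasFDerivAt.fun_sum (fun i _ => (A u i).hasFDerivAt.exp)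

-- gradient map and its derivative
noncomputable def T (x : V) : V := ∑ i, P u i x • ((2:ℝ) • u i)
noncomputable def Td (x : V) : EuclideanSpace ℝ (Fin n) →L[ℝ] EuclideanSpace ℝ (Fin n) :=
  ∑ i, (P u i x • A u i).smulRight ((2:ℝ) • u i)
noncomputable def Gm (x : V) : V := (Sm u x)⁻¹ • T u x
noncomputable def Gd (x : V) : EuclideanSpace ℝ (Fin n) →L[ℝ] EuclideanSpace ℝ (Fin n) :=
  (Sm u x)⁻¹ • Td u x + (-(Sm u x ^ 2)⁻¹ • Sd u x).smulRight (T u x)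

lemma hasFDerivAt_T (x : V) : HasFDerivAt (T u) (Td u x) x := by
  refine HasFDerivAt.fun_sum (fun i _ => ?_)
  have h := ((A u i).hasFDerivAt.exp (x := x)).smul (hasFDerivAt_const ((2:ℝ) • u i) x)
  simp at h
  exact h

lemma hasFDerivAt_inv_Sm (x : V) :
    HasFDerivAt (fun y => (Sm u y)⁻¹) (-(Sm u x ^ 2)⁻¹ • Sd u x) x :=
  (hasDerivAt_inv (Sm_pos u x).ne').comp_hasFDerivAt x (hasFDerivAt_Sm u x)

lemma hasFDerivAt_Gm (x : V) : HasFDerivAt (Gm u) (Gd u x) x := by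
  have h := (hasFDerivAt_inv_Sm u x).smul (hasFDerivAt_T u x)
  exact h

-- first derivative of f
noncomputable def Dm (x : V) : EuclideanSpace ℝ (Fin n) →L[ℝ] ℝ := (Sm u x)⁻¹ • Sd u x

lemma hasFDerivAt_f {f : V → ℝ} (hf : f = fun x => Real.log (Sm u x)) (x : V) :
    HasFDerivAt f (Dm u x) x := by
  subst hf
  exact (hasFDerivAt_Sm u x).log (Sm_pos u x).ne'

lemma fderiv_f {f : V → ℝ} (hf : f = fun x => Real.log (Sm u x)) :
    fderiv ℝ f = fun x => Dm u x := by
  funext x; exact (hasFDerivAt_f u hf x).fderiv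

lemma T_inner (x v : V) : ⟪T u x, v⟫ = ∑ i, P u i x * A u i v := by
  rw [T, sum_inner]
  refine Finset.sum_congr rfl fun i _ => ?_
  rw [real_inner_smul_left, real_inner_smul_left]
  simp [A]

lemma Dm_eq_inner (x v : V) : Dm u x v = ⟪Gm u x, v⟫ := by
  rw [Gm, real_inner_smul_left, T_inner]
  simp [Dm, Sd]

-- second derivative of f
noncomputable def Sdd (x : V) :
    EuclideanSpace ℝ (Fin n) →L[ℝ] EuclideanSpace ℝ (Fin n) →L[ℝ] ℝ :=
  ∑ i, (P u i x • A u i).smulRight (A u i)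

noncomputable def Dd (x : V) :
    EuclideanSpace ℝ (Fin n) →L[ℝ] EuclideanSpace ℝ (Fin n) →L[ℝ] ℝ :=
  (Sm u x)⁻¹ • Sdd u x + (-(Sm u x ^ 2)⁻¹ • Sd u x).smulRight (Sd u x)

lemma Sdd_apply (x v w : V) : Sdd u x v w = ∑ i, P u i x * A u i v * A u i w := by
  simp only [Sdd, ContinuousLinearMap.coe_sum', Finset.sum_apply,
    ContinuousLinearMap.smulRight_apply, ContinuousLinearMap.coe_smul', Pi.smul_apply,
    smul_eq_mul, Finset.sum_apply]

lemma hasFDerivAt_Sd (x : V) : HasFDerivAt (Sd u) (Sdd u x) x := by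
  refine HasFDerivAt.fun_sum (fun i _ => ?_)
  have h := ((A u i).hasFDerivAt.exp (x := x)).smul (hasFDerivAt_const (A u i) x)
  simp at h
  exact h

lemma hasFDerivAt_Dm (x : V) : HasFDerivAt (Dm u) (Dd u x) x := by
  have h := (hasFDerivAt_inv_Sm u x).smul (hasFDerivAt_Sd u x)
  exact h

lemma Dd_apply (x v w : V) :
    Dd u x v w = (Sm u x)⁻¹ * ∑ i, P u i x * A u i v * A u i w
      - (Sm u x ^ 2)⁻¹ * ((∑ i, P u i x * A u i v) * (∑ i, P u i x * A u i w)) := by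
  have h1 : Dd u x v w = (Sm u x)⁻¹ * (Sdd u x v w) + (-(Sm u x ^ 2)⁻¹ * Sd u x v) * Sd u x w := by
    simp only [Dd, ContinuousLinearMap.add_apply, ContinuousLinearMap.smul_apply,
      ContinuousLinearMap.smulRight_apply, ContinuousLinearMap.coe_smul', Pi.smul_apply,
      smul_eq_mul]
  rw [h1, Sdd_apply, Sd_apply, Sd_apply]
  ring

lemma Td_inner (x v w : V) : ⟪Td u x v, w⟫ = ∑ i, P u i x * A u i v * A u i w := by
  simp only [Td, ContinuousLinearMap.coe_sum', Finset.sum_apply,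
    ContinuousLinearMap.smulRight_apply, ContinuousLinearMap.coe_smul', Pi.smul_apply,
    smul_eq_mul]
  rw [sum_inner]
  refine Finset.sum_congr rfl fun i _ => ?_
  rw [real_inner_smul_left, real_inner_smul_left]
  simp [A]

lemma Gd_inner (x v w : V) : ⟪Gd u x v, w⟫ = Dd u x v w := by
  rw [Dd_apply]
  simp only [Gd, ContinuousLinearMap.add_apply, ContinuousLinearMap.smul_apply,
    ContinuousLinearMap.smulRight_apply, smul_eq_mul]
  rw [inner_add_left, real_inner_smul_left, real_inner_smul_left, Td_inner, T_inner,
    Sd_apply]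
  ring

lemma eq_zero_of_inner_diff (hspan : affineSpan ℝ (Set.range u) = ⊤) (v : V)
    (h : ∀ i j, ⟪u i - u j, v⟫ = 0) : v = 0 := by
  have h1 : vectorSpan ℝ (Set.range u) = ⊤ := by
    rw [← direction_affineSpan, hspan, AffineSubspace.direction_top]
  have h2 : vectorSpan ℝ (Set.range u) ≤ (ℝ ∙ v)ᗮ := by
    rw [vectorSpan_def]
    refine Submodule.span_le.2 ?_
    rintro z hz
    obtain ⟨a, ⟨i, rfl⟩, b, ⟨j, rfl⟩, rfl⟩ := Set.mem_vsub.1 hz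
    rw [SetLike.mem_coe, Submodule.mem_orthogonal_singleton_iff_inner_right]
    rw [real_inner_comm]
    exact h i j
  have hv : v ∈ (ℝ ∙ v)ᗮ := by
    have := h1 ▸ h2
    exact this Submodule.mem_top
  rw [Submodule.mem_orthogonal_singleton_iff_inner_right] at hv
  exact inner_self_eq_zero.1 hv

lemma Dd_pos (hspan : affineSpan ℝ (Set.range u) = ⊤) (x : V) {v : V} (hv : v ≠ 0) :
    0 < Dd u x v v := by
  set S := Sm u x with hS
  have hS0 : (0:ℝ) < S := Sm_pos u x
  set m : ℝ := S⁻¹ * ∑ i, P u i x * A u i v with hm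
  have hsum : ∑ i, P u i x * A u i v = m * S := by
    rw [hm]; field_simp
  have expand : ∑ i, P u i x * (A u i v - m)^2
      = (∑ i, P u i x * (A u i v * A u i v)) - 2*m*(∑ i, P u i x * A u i v)
        + m^2 * S := by
    have h3 : ∀ i : Fin (N+1), P u i x * (A u i v - m)^2
        = P u i x * (A u i v * A u i v) - 2*m*(P u i x * A u i v) + m^2 * P u i x :=
      fun i => by ring
    rw [Finset.sum_congr rfl (fun i _ => h3 i), Finset.sum_add_distrib,
      Finset.sum_sub_distrib, ← Finset.mul_sum, ← Finset.mul_sum, hS, Sm]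
  have key : Dd u x v v = S⁻¹ * ∑ i, P u i x * (A u i v - m)^2 := by
    rw [Dd_apply, expand, hsum]
    have h1 : ∀ i : Fin (N+1), P u i x * A u i v * A u i v = P u i x * (A u i v * A u i v) :=
      fun i => by ring
    rw [Finset.sum_congr rfl (fun i _ => h1 i)]
    rw [← hS]
    field_simp
    ring
  rw [key]
  refine mul_pos (inv_pos.2 hS0) ?_
  have hex : ∃ i, A u i v ≠ m := by
    by_contra hc
    push_neg at hc
    refine hv (eq_zero_of_inner_diff u hspan v fun i j => ?_)
    have h4 : A u i v = A u j v := by rw [hc i, hc j]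
    rw [A_apply, A_apply] at h4
    rw [inner_sub_left]
    linarith
  obtain ⟨i0, hi0⟩ := hex
  exact Finset.sum_pos' (fun i _ => mul_nonneg (Real.exp_pos _).le (sq_nonneg _))
    ⟨i0, Finset.mem_univ i0, mul_pos (Real.exp_pos _) (sq_pos_of_ne_zero (sub_ne_zero.2 hi0))⟩

-- decomposition of vectors in the standard basis
lemma sum_single (y : EuclideanSpace ℝ (Fin n)) :
    ∑ i, y i • EuclideanSpace.single i (1:ℝ) = y := by
  have h := (EuclideanSpace.basisFun (Fin n) ℝ).toBasis.sum_repr y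
  simpa [OrthonormalBasis.coe_toBasis_repr_apply, OrthonormalBasis.coe_toBasis] using h

-- the Hessian matrix of f
lemma hessian_eq {f : V → ℝ} (hf : f = fun x => Real.log (Sm u x)) (x : V) :
    hessianMatrix f x
      = fun i j => Dd u x (EuclideanSpace.single i 1) (EuclideanSpace.single j 1) := by
  funext i j
  rw [hessianMatrix, iteratedFDeriv_two_apply, fderiv_f u hf]
  have := (hasFDerivAt_Dm u x).fderiv
  rw [this]
  simp

lemma hessian_entry {f : V → ℝ} (hf : f = fun x => Real.log (Sm u x)) (x : V) (i j : Fin n) :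
    hessianMatrix f x i j = Gd u x (EuclideanSpace.single i 1) j := by
  rw [hessian_eq u hf]
  dsimp only
  rw [← Gd_inner, EuclideanSpace.inner_single_right]
  simp

lemma hessian_posDef (hspan : affineSpan ℝ (Set.range u) = ⊤)
    {f : V → ℝ} (hf : f = fun x => Real.log (Sm u x)) (x : V) :
    (hessianMatrix f x).PosDef := by
  rw [hessian_eq u hf]
  refine Matrix.posDef_iff_dotProduct_mulVec.mpr ?_
  constructor
  · show Matrix.IsHermitian _
    unfold Matrix.IsHermitian
    funext i j
    show Dd u x (EuclideanSpace.single j 1) (EuclideanSpace.single i 1) = Dd u x (EuclideanSpace.single i 1) (EuclideanSpace.single j 1)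
    rw [Dd_apply, Dd_apply]
    have hcomm : (∑ k, P u k x * A u k (EuclideanSpace.single j 1) * A u k (EuclideanSpace.single i 1))
        = ∑ k, P u k x * A u k (EuclideanSpace.single i 1) * A u k (EuclideanSpace.single j 1) :=
      Finset.sum_congr rfl fun k _ => by ring
    rw [hcomm]
    ring
  · intro v hv
    set w : EuclideanSpace ℝ (Fin n) := (WithLp.equiv 2 (Fin n → ℝ)).symm v with hw
    have hw0 : w ≠ 0 := by
      intro h0
      exact hv (by simpa [hw] using congrArg (WithLp.equiv 2 (Fin n → ℝ)) h0)
    have hws : ∀ i, w i = v i := fun i => rfl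
    have hdecomp : w = ∑ i, v i • EuclideanSpace.single i (1:ℝ) := by
      rw [← sum_single w]
      exact Finset.sum_congr rfl fun i _ => by rw [hws]
    have h1 : ∀ z : EuclideanSpace ℝ (Fin n),
        Dd u x w z = ∑ i, v i * Dd u x (EuclideanSpace.single i 1) z := by
      intro z
      conv_lhs => rw [hdecomp]
      rw [map_sum]
      simp only [_root_.map_smul, ContinuousLinearMap.coe_sum', Finset.sum_apply,
        ContinuousLinearMap.coe_smul', Pi.smul_apply, smul_eq_mul]
    have h2 : ∀ i : Fin n,
        Dd u x (EuclideanSpace.single i 1) w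
          = ∑ j, v j * Dd u x (EuclideanSpace.single i 1) (EuclideanSpace.single j 1) := by
      intro i
      conv_lhs => rw [hdecomp]
      rw [map_sum]
      simp only [_root_.map_smul, smul_eq_mul]
    have key : dotProduct (star v)
        (Matrix.mulVec (fun i j =>
          Dd u x (EuclideanSpace.single i 1) (EuclideanSpace.single j 1)) v)
        = Dd u x w w := by
      rw [h1 w]
      simp only [dotProduct, Matrix.mulVec, star_trivial]
      refine Finset.sum_congr rfl fun i _ => ?_
      rw [h2 i, Finset.mul_sum]
      rw [Finset.mul_sum]
      refine Finset.sum_congr rfl fun j _ => by ring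
    rw [key]
    exact Dd_pos u hspan x hw0

lemma det_Gd_eq (hspan : affineSpan ℝ (Set.range u) = ⊤)
    {f : V → ℝ} (hf : f = fun x => Real.log (Sm u x)) (x : V) :
    (Gd u x).det = (hessianMatrix f x).det := by
  have hmat : LinearMap.toMatrix (EuclideanSpace.basisFun (Fin n) ℝ).toBasis
      (EuclideanSpace.basisFun (Fin n) ℝ).toBasis (Gd u x : V →ₗ[ℝ] V)
      = (hessianMatrix f x).transpose := by
    funext i j
    rw [LinearMap.toMatrix_apply, Matrix.transpose_apply, hessian_entry u hf]
    simp [OrthonormalBasis.coe_toBasis_repr_apply, OrthonormalBasis.coe_toBasis]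
  rw [ContinuousLinearMap.det, ← LinearMap.det_toMatrix
    (EuclideanSpace.basisFun (Fin n) ℝ).toBasis, hmat, Matrix.det_transpose]

lemma det_hessian_pos (hspan : affineSpan ℝ (Set.range u) = ⊤)
    {f : V → ℝ} (hf : f = fun x => Real.log (Sm u x)) (x : V) :
    0 < (hessianMatrix f x).det :=
  (hessian_posDef u hspan hf x).det_pos

-- injectivity of the gradient map
lemma Gm_injective (hspan : affineSpan ℝ (Set.range u) = ⊤) :
    Function.Injective (Gm u) := by
  intro x y hxy
  by_contra hne
  set d : EuclideanSpace ℝ (Fin n) := y - x with hd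
  have hd0 : d ≠ 0 := sub_ne_zero.2 (Ne.symm hne)
  set φ : ℝ → ℝ := fun t => ⟪d, Gm u (x + t • d)⟫ with hφ
  have hline : ∀ t : ℝ, HasDerivAt (fun t : ℝ => x + t • d) d t := by
    intro t
    simpa using ((hasDerivAt_id t).smul_const d).const_add x
  have hder : ∀ t : ℝ, HasDerivAt φ ⟪d, Gd u (x + t • d) d⟫ t := by
    intro t
    have hG1 := (hasFDerivAt_Gm u (x + t • d)).comp_hasDerivAt t (hline t)
    exact (innerSL ℝ d).hasFDerivAt.comp_hasDerivAt t hG1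
  have hmono : StrictMono φ := by
    refine strictMono_of_deriv_pos fun t => ?_
    rw [(hder t).deriv]
    rw [real_inner_comm, Gd_inner]
    exact Dd_pos u hspan _ hd0
  have h01 : φ 0 < φ 1 := hmono one_pos
  have he0 : φ 0 = ⟪d, Gm u x⟫ := by simp [hφ]
  have he1 : φ 1 = ⟪d, Gm u y⟫ := by
    have : x + (1:ℝ) • d = y := by
      rw [hd, one_smul]; abel
    rw [hφ]; simp only [this]
  rw [he0, he1, hxy] at h01
  exact lt_irrefl _ h01

-- the gradient map takes values in 2 • Q
lemma Gm_mem_smul_hull (x : V) :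
    Gm u x ∈ (2:ℝ) • convexHull ℝ (Set.range u) := by
  have hmem : (Sm u x)⁻¹ • ∑ i, P u i x • u i ∈ convexHull ℝ (Set.range u) := by
    have h := Finset.centerMass_mem_convexHull (Finset.univ : Finset (Fin (N+1)))
      (w := fun i => P u i x) (fun i _ => (Real.exp_pos _).le)
      (by simpa [Sm] using Sm_pos u x) (z := u) (fun i _ => Set.mem_range_self i)
    rwa [Finset.centerMass, ← Sm] at h
  have heq : Gm u x = (2:ℝ) • ((Sm u x)⁻¹ • ∑ i, P u i x • u i) := by
    rw [Gm, T]
    rw [smul_comm]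
    congr 1
    rw [Finset.smul_sum]
    exact Finset.sum_congr rfl fun i _ => smul_comm _ _ _
  rw [heq]
  exact Set.smul_mem_smul_set hmem

-- upper bound for inner products over the hull
lemma inner_le_flog (x : V) (i : Fin (N+1)) : 2 * ⟪u i, x⟫ ≤ Real.log (Sm u x) := by
  rw [Real.le_log_iff_exp_le (Sm_pos u x)]
  have : Real.exp (2 * ⟪u i, x⟫) = P u i x := by simp [P]
  rw [this, Sm]
  exact Finset.single_le_sum (f := fun j => P u j x)
    (fun j _ => (Real.exp_pos _).le) (Finset.mem_univ i)

lemma hull_inner_le (x : V) {q : V} (hq : q ∈ convexHull ℝ (Set.range u)) :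
    2 * ⟪q, x⟫ ≤ Real.log (Sm u x) := by
  have hne : (Finset.univ : Finset (Fin (N+1))).Nonempty := ⟨0, Finset.mem_univ 0⟩
  set B : ℝ := Finset.univ.sup' hne (fun i => ⟪u i, x⟫) with hB
  have hlin : IsLinearMap ℝ (fun p : EuclideanSpace ℝ (Fin n) => ⟪p, x⟫) :=
    ⟨fun a b => inner_add_left a b x, fun c a => real_inner_smul_left a x c⟩
  have hsub : convexHull ℝ (Set.range u) ⊆ {p | ⟪p, x⟫ ≤ B} := by
    refine convexHull_min ?_ (convex_halfSpace_le hlin B)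
    rintro p ⟨i, rfl⟩
    exact Finset.le_sup' (fun i => ⟪u i, x⟫) (Finset.mem_univ i)
  obtain ⟨i, _, hBi⟩ := Finset.exists_mem_eq_sup' hne (fun i => ⟪u i, x⟫)
  have h1 : ⟪q, x⟫ ≤ B := hsub hq
  have h2 : (2:ℝ) * ⟪q, x⟫ ≤ 2 * ⟪u i, x⟫ := by
    rw [hB] at h1; rw [hBi] at h1; linarith
  exact h2.trans (inner_le_flog u x i)

-- surjectivity onto the interior of 2 • Q
lemma Gm_surj (y : V)
    (hy : y ∈ interior ((2:ℝ) • convexHull ℝ (Set.range u))) :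
    ∃ x, Gm u x = y := by
  obtain ⟨ε, hε, hball⟩ := Metric.isOpen_iff.1 isOpen_interior y hy
  have hball' : Metric.ball y ε ⊆ (2:ℝ) • convexHull ℝ (Set.range u) :=
    hball.trans interior_subset
  set h : EuclideanSpace ℝ (Fin n) → ℝ := fun x => Real.log (Sm u x) - ⟪y, x⟫ with hh
  have hder : ∀ x, HasFDerivAt h (Dm u x - innerSL ℝ y) x := by
    intro x
    exact (hasFDerivAt_f u rfl x).sub (innerSL ℝ y).hasFDerivAt
  have hcont : Continuous h :=
    continuous_iff_continuousAt.2 fun x => (hder x).differentiableAt.continuousAt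
  have hbound : ∀ x, ε / 2 * ‖x‖ ≤ h x := by
    intro x
    rcases eq_or_ne x 0 with rfl | hx0
    · have : (0:ℝ) ≤ Real.log (Sm u 0) := by
        rw [Real.le_log_iff_exp_le (Sm_pos u 0), Real.exp_zero]
        calc (1:ℝ) = P u 0 (0 : EuclideanSpace ℝ (Fin n)) := by simp [P]
        _ ≤ Sm u 0 := Finset.single_le_sum (f := fun j => P u j (0 : EuclideanSpace ℝ (Fin n)))
            (fun j _ => (Real.exp_pos _).le) (Finset.mem_univ 0)
      simpa [hh] using this
    · set z : EuclideanSpace ℝ (Fin n) := y + (ε/2) • (‖x‖⁻¹ • x) with hz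
      have hzball : z ∈ Metric.ball y ε := by
        rw [Metric.mem_ball, dist_eq_norm, hz]
        have hxn : ‖(‖x‖⁻¹ • x : EuclideanSpace ℝ (Fin n))‖ = 1 := by
          rw [norm_smul, norm_inv, norm_norm, inv_mul_cancel₀ (norm_ne_zero_iff.2 hx0)]
        rw [add_sub_cancel_left, norm_smul, hxn]
        rw [Real.norm_eq_abs, abs_of_pos (half_pos hε)]
        simp
        linarith
      obtain ⟨q, hq, hq2⟩ := hball' hzball
      have hinner : ⟪z, x⟫ ≤ Real.log (Sm u x) := by
        rw [← hq2, real_inner_smul_left]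
        exact hull_inner_le u x hq
      have hzx : ⟪z, x⟫ = ⟪y, x⟫ + ε/2 * ‖x‖ := by
        rw [hz, inner_add_left, real_inner_smul_left, real_inner_smul_left,
          real_inner_self_eq_norm_sq]
        have hns : ‖x‖⁻¹ * ‖x‖ ^ 2 = ‖x‖ := by
          rw [sq]
          field_simp
        rw [hns]
      rw [hh]
      simp only
      rw [hzx] at hinner
      linarith
  have htends : Filter.Tendsto h (Filter.cocompact _) Filter.atTop := by
    refine Filter.tendsto_atTop_mono hbound ?_
    exact (tendsto_norm_cocompact_atTop).const_mul_atTop (half_pos hε)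
  obtain ⟨x0, hx0⟩ := hcont.exists_forall_le htends
  have hloc : IsLocalMin h x0 := Filter.Eventually.of_forall hx0
  have hzero := hloc.hasFDerivAt_eq_zero (hder x0)
  refine ⟨x0, ?_⟩
  refine ext_inner_right ℝ fun v => ?_
  have := congrArg (fun (L : EuclideanSpace ℝ (Fin n) →L[ℝ] ℝ) => L v) hzero
  simp only [ContinuousLinearMap.sub_apply, ContinuousLinearMap.zero_apply,
    innerSL_apply_apply, sub_eq_zero] at this
  rw [← Dm_eq_inner, this]

-- the image of the gradient map is a.e. equal to 2 • Q
lemma image_ae_eq (hspan : affineSpan ℝ (Set.range u) = ⊤) :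
    Gm u '' Set.univ =ᵐ[(volume : Measure (EuclideanSpace ℝ (Fin n)))]
      ((2:ℝ) • convexHull ℝ (Set.range u)) := by
  set K : Set (EuclideanSpace ℝ (Fin n)) := (2:ℝ) • convexHull ℝ (Set.range u) with hK
  have hKcomp : IsCompact K := by
    rw [hK, ← Set.image_smul]
    exact ((Set.finite_range u).isCompact_convexHull ℝ).image (continuous_const_smul (2:ℝ))
  have hKconv : Convex ℝ K := (convex_convexHull ℝ _).smul _
  have hsub1 : Gm u '' Set.univ ⊆ K := by
    rintro z ⟨x, _, rfl⟩
    exact Gm_mem_smul_hull u x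
  have hsub2 : interior K ⊆ Gm u '' Set.univ := by
    intro y hy
    obtain ⟨x, hx⟩ := Gm_surj u y hy
    exact ⟨x, Set.mem_univ x, hx⟩
  rw [MeasureTheory.ae_eq_set]
  constructor
  · rw [Set.diff_eq_empty.2 hsub1]
    exact measure_empty
  · refine measure_mono_null ?_ (hKconv.addHaar_frontier volume)
    rw [hKcomp.isClosed.frontier_eq]
    exact Set.diff_subset_diff_right hsub2

lemma proj_continuous (s : Fin n) : Continuous (fun y : EuclideanSpace ℝ (Fin n) => y s) := by
  have : (fun y : EuclideanSpace ℝ (Fin n) => y s)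
      = fun y => ⟪EuclideanSpace.single s (1:ℝ), y⟫ := by
    funext y
    rw [EuclideanSpace.inner_single_left]
    simp
  rw [this]
  exact (innerSL ℝ (EuclideanSpace.single s (1:ℝ))).continuous

-- main change of variables
lemma key_cov (hspan : affineSpan ℝ (Set.range u) = ⊤)
    {f : V → ℝ} (hf : f = fun x => Real.log (Sm u x)) (s : Fin n) :
    Integrable
      (fun x => fderiv ℝ f x (EuclideanSpace.single s 1) * (hessianMatrix f x).det) volume ∧
    (∫ x, fderiv ℝ f x (EuclideanSpace.single s 1) * (hessianMatrix f x).det ∂volume)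
      = ∫ y in ((2:ℝ) • convexHull ℝ (Set.range u)), y s ∂volume := by
  set K : Set (EuclideanSpace ℝ (Fin n)) := (2:ℝ) • convexHull ℝ (Set.range u) with hK
  have hKcomp : IsCompact K := by
    rw [hK, ← Set.image_smul]
    exact ((Set.finite_range u).isCompact_convexHull ℝ).image (continuous_const_smul (2:ℝ))
  have hKmeas : MeasurableSet K := hKcomp.isClosed.measurableSet
  have hgint : IntegrableOn (fun y : EuclideanSpace ℝ (Fin n) => y s) K volume :=
    (proj_continuous s).continuousOn.integrableOn_compact hKcomp
  have hG' : ∀ x ∈ (Set.univ : Set (EuclideanSpace ℝ (Fin n))),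
      HasFDerivWithinAt (Gm u) (Gd u x) Set.univ x :=
    fun x _ => (hasFDerivAt_Gm u x).hasFDerivWithinAt
  have hinj : Set.InjOn (Gm u) Set.univ := (Gm_injective u hspan).injOn
  have hptwise : ∀ x : EuclideanSpace ℝ (Fin n),
      |(Gd u x).det| • (fun y : EuclideanSpace ℝ (Fin n) => y s) (Gm u x)
        = fderiv ℝ f x (EuclideanSpace.single s 1) * (hessianMatrix f x).det := by
    intro x
    have h1 : fderiv ℝ f x (EuclideanSpace.single s 1) = Gm u x s := by
      rw [fderiv_f u hf]
      rw [Dm_eq_inner, EuclideanSpace.inner_single_right]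
      simp
    have h2 : |(Gd u x).det| = (hessianMatrix f x).det := by
      rw [det_Gd_eq u hspan hf, abs_of_pos (det_hessian_pos u hspan hf x)]
    rw [h1, h2]
    simp [mul_comm]
  constructor
  · have hOn : IntegrableOn (fun y : EuclideanSpace ℝ (Fin n) => y s)
        (Gm u '' Set.univ) volume := hgint.mono_set (by
      rintro z ⟨x, _, rfl⟩; exact Gm_mem_smul_hull u x)
    have h3 := (integrableOn_image_iff_integrableOn_abs_det_fderiv_smul volume
      MeasurableSet.univ hG' hinj (fun y : EuclideanSpace ℝ (Fin n) => y s)).1 hOn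
    rw [MeasureTheory.integrableOn_univ] at h3
    exact h3.congr (Filter.Eventually.of_forall hptwise)
  · have h4 := integral_image_eq_integral_abs_det_fderiv_smul volume
      MeasurableSet.univ hG' hinj (fun y : EuclideanSpace ℝ (Fin n) => y s)
    rw [MeasureTheory.setIntegral_congr_set (image_ae_eq u hspan)] at h4
    have h5 : (∫ x, fderiv ℝ f x (EuclideanSpace.single s 1) * (hessianMatrix f x).det ∂volume)
        = ∫ x, |(Gd u x).det| • Gm u x s ∂volume :=
      integral_congr_ae (Filter.Eventually.of_forall fun x => (hptwise x).symm)
    rw [h5, ← MeasureTheory.setIntegral_univ]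
    exact h4.symm

lemma scaling (s : Fin n) :
    (∫ y in ((2:ℝ) • convexHull ℝ (Set.range u)), y s ∂volume)
      = 2 ^ (n+1) * ∫ y in convexHull ℝ (Set.range u), y s ∂volume := by
  set Q : Set (EuclideanSpace ℝ (Fin n)) := convexHull ℝ (Set.range u) with hQdef
  have hQcomp : IsCompact Q := (Set.finite_range u).isCompact_convexHull ℝ
  have hQmeas : MeasurableSet Q := hQcomp.isClosed.measurableSet
  set K : Set (EuclideanSpace ℝ (Fin n)) := (2:ℝ) • Q with hKdef
  have hKcomp : IsCompact K := by
    rw [hKdef, ← Set.image_smul]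
    exact hQcomp.image (continuous_const_smul (2:ℝ))
  have hKmeas : MeasurableSet K := hKcomp.isClosed.measurableSet
  set F : EuclideanSpace ℝ (Fin n) → ℝ := Set.indicator K (fun y => y s) with hF
  have h2 := MeasureTheory.Measure.integral_comp_smul
    (volume : Measure (EuclideanSpace ℝ (Fin n))) F (2:ℝ)
  have hFs : ∀ x : EuclideanSpace ℝ (Fin n),
      F ((2:ℝ) • x) = Set.indicator Q (fun y => 2 * y s) x := by
    intro x
    by_cases hx : x ∈ Q
    · rw [Set.indicator_of_mem hx]
      have hmem : (2:ℝ) • x ∈ K := Set.smul_mem_smul_set hx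
      rw [hF, Set.indicator_of_mem hmem]
      rfl
    · have hmem : (2:ℝ) • x ∉ K := by
        rw [hKdef]
        intro hc
        exact hx ((Set.smul_mem_smul_set_iff₀ (by norm_num : (2:ℝ) ≠ 0) Q x).1 hc)
      rw [Set.indicator_of_notMem hx, hF, Set.indicator_of_notMem hmem]
  have hL : (∫ x, F ((2:ℝ) • x) ∂(volume : Measure (EuclideanSpace ℝ (Fin n))))
      = 2 * ∫ y in Q, y s ∂volume := by
    rw [integral_congr_ae (Filter.Eventually.of_forall hFs), integral_indicator hQmeas,
      integral_const_mul]
  have hR : (∫ x, F x ∂(volume : Measure (EuclideanSpace ℝ (Fin n))))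
      = ∫ y in K, y s ∂volume := integral_indicator hKmeas
  rw [hL, hR, finrank_euclideanSpace_fin] at h2
  have h2n : ((2:ℝ) ^ n) ≠ 0 := by positivity
  have habs : |((2:ℝ) ^ n)⁻¹| = ((2:ℝ)^n)⁻¹ := by
    rw [abs_of_pos]; positivity
  rw [habs, smul_eq_mul] at h2
  have hfin : (2:ℝ)^n * (2 * ∫ y in Q, y s ∂volume) = ∫ y in K, y s ∂volume := by
    rw [h2]
    field_simp
  rw [hKdef] at hfin
  rw [← hfin, pow_succ]
  ring

end Stmt3Aux

/-- For points `u 0, …, u N` affinely spanning `ℝⁿ`, with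
`Q = conv {u 0, …, u N}` and `f x = log (∑ i, exp (2 ⟪u i, x⟫))`, the function
`x ↦ (∂f/∂x_s)(x) · det Hess f (x)` is Lebesgue-integrable on `ℝⁿ` and its integral
equals `∫_{2Q} y_s dy`, which in turn equals `2 ^ (n+1) · ∫_Q y_s dy`. -/
theorem statement3 (n N : ℕ) (u : Fin (N + 1) → EuclideanSpace ℝ (Fin n))
    (hspan : affineSpan ℝ (Set.range u) = ⊤)
    (Q : Set (EuclideanSpace ℝ (Fin n))) (hQ : Q = convexHull ℝ (Set.range u))
    (f : EuclideanSpace ℝ (Fin n) → ℝ)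
    (hf : ∀ x, f x = Real.log (∑ i, Real.exp (2 * ⟪u i, x⟫)))
    (s : Fin n) :
    Integrable
      (fun x => fderiv ℝ f x (EuclideanSpace.single s 1) * (hessianMatrix f x).det)
      volume ∧
    (∫ x, fderiv ℝ f x (EuclideanSpace.single s 1) * (hessianMatrix f x).det ∂volume) =
      (∫ y in ((2 : ℝ) • Q), y s ∂volume) ∧
    (∫ y in ((2 : ℝ) • Q), y s ∂volume) = 2 ^ (n + 1) * ∫ y in Q, y s ∂volume := by
  subst hQ
  have hfe : f = fun x => Real.log (Stmt3Aux.Sm u x) := Stmt3Aux.f_eq u hf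
  obtain ⟨hint, heq⟩ := Stmt3Aux.key_cov u hspan hfe s
  exact ⟨hint, heq, Stmt3Aux.scaling u s⟩
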